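/- arXiv:2106.05472 — 3 statements merged into one kernel-verified Lean document; each statement's English description precedes it below -/
import Mathlib

section
/- Let 0 < σ̲ ≤ σ̄ and let q be the oscillating-normal density with threshold c = 0, i.e. q(y) = (2σ̄/(σ̄+σ̲))·q*(y; σ̲) for y ≥ 0 and q(y) = (2σ̲/(σ̄+σ̲))·q*(y; σ̄) for y < 0, where q*(y; σ) = (1/(σ√(2π)))·exp(−y²/(2σ²)). Then q is a probability density with zero mean and variance σ̲·σ̄; that is, ∫_ℝ q(y) dy = 1, ∫_ℝ y·q(y) dy = 0, and ∫_ℝ y²·q(y) dy = σ̲·σ̄. -/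
open MeasureTheory Real

noncomputable section

namespace LAB

/-- The density `q*(y; σ)` of the normal distribution `N(0, σ²)`. -/
def normalDensity (σ y : ℝ) : ℝ :=
  (1 / (σ * Real.sqrt (2 * Real.pi))) * Real.exp (-(y ^ 2) / (2 * σ ^ 2))

/-- The oscillating-normal density with threshold `c = 0`. -/
def oscDensityZero (σlo σhi : ℝ) : ℝ → ℝ := fun y =>
  if 0 ≤ y then (2 * σhi / (σhi + σlo)) * normalDensity σlo y
  else (2 * σlo / (σhi + σlo)) * normalDensity σhi y

open Set Filter

lemma exp_tendsto_zero {b : ℝ} (hb : 0 < b) :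
    Tendsto (fun x : ℝ => Real.exp (-b * x ^ 2)) atTop (nhds 0) :=
  tendsto_exp_atBot.comp
    ((tendsto_pow_atTop two_ne_zero).const_mul_atTop_of_neg (neg_lt_zero.2 hb))

lemma mul_exp_tendsto_zero {b : ℝ} (hb : 0 < b) :
    Tendsto (fun x : ℝ => x * Real.exp (-b * x ^ 2)) atTop (nhds 0) := by
  have h := (rpow_mul_exp_neg_mul_sq_isLittleO_exp_neg hb 1).isBigO.trans_tendsto
    (tendsto_exp_atBot.comp (tendsto_id.const_mul_atTop_of_neg (by norm_num : (-(1/2) : ℝ) < 0)))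
  refine h.congr' ?_
  filter_upwards with x
  rw [Real.rpow_one]

lemma integral_mul_exp_Ioi {b : ℝ} (hb : 0 < b) :
    ∫ x in Ioi (0:ℝ), x * Real.exp (-b * x ^ 2) = (2 * b)⁻¹ := by
  have A : ∀ x : ℝ, HasDerivAt (fun x => -(2 * b)⁻¹ * Real.exp (-b * x ^ 2))
      (x * Real.exp (-b * x ^ 2)) x := by
    intro x
    convert ((hasDerivAt_pow 2 x).const_mul (-b)).exp.const_mul (-(2 * b)⁻¹) using 1
    · rfl
    · rfl
    field_simp
    ring
  have B : Tendsto (fun x : ℝ => -(2 * b)⁻¹ * Real.exp (-b * x ^ 2)) atTop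
      (nhds (-(2 * b)⁻¹ * 0)) := (exp_tendsto_zero hb).const_mul _
  have := integral_Ioi_of_hasDerivAt_of_tendsto' (a := (0:ℝ)) (fun x _ => A x)
    (integrable_mul_exp_neg_mul_sq hb).integrableOn B
  rw [this]
  simp

lemma integrable_sq_mul_exp {b : ℝ} (hb : 0 < b) :
    Integrable (fun x : ℝ => x ^ 2 * Real.exp (-b * x ^ 2)) := by
  have h := integrable_rpow_mul_exp_neg_mul_sq hb (s := 2) (by norm_num)
  refine h.congr (Filter.Eventually.of_forall fun x => ?_)
  simp [Real.rpow_two]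

lemma integral_sq_mul_exp_Ioi {b : ℝ} (hb : 0 < b) :
    ∫ x in Ioi (0:ℝ), x ^ 2 * Real.exp (-b * x ^ 2)
      = (2 * b)⁻¹ * (Real.sqrt (Real.pi / b) / 2) := by
  have key : ∫ x in Ioi (0:ℝ),
      (x ^ 2 * Real.exp (-b * x ^ 2) - (2 * b)⁻¹ * Real.exp (-b * x ^ 2)) = 0 := by
    have A : ∀ x : ℝ, HasDerivAt (fun x => -(2 * b)⁻¹ * x * Real.exp (-b * x ^ 2))
        (x ^ 2 * Real.exp (-b * x ^ 2) - (2 * b)⁻¹ * Real.exp (-b * x ^ 2)) x := by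
      intro x
      have h1 : HasDerivAt (fun x : ℝ => -(2 * b)⁻¹ * x) (-(2 * b)⁻¹) x := by
        simpa using (hasDerivAt_id x).const_mul (-(2 * b)⁻¹)
      have h2 : HasDerivAt (fun x : ℝ => Real.exp (-b * x ^ 2))
          (Real.exp (-b * x ^ 2) * (-b * (2 * x))) x := by
        simpa using ((hasDerivAt_pow 2 x).const_mul (-b)).exp
      convert h1.mul h2 using 1
      · rfl
      · rfl
      · rfl
      field_simp
      ring
    have B : Tendsto (fun x : ℝ => -(2 * b)⁻¹ * x * Real.exp (-b * x ^ 2)) atTop (nhds 0) := by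
      have := (mul_exp_tendsto_zero hb).const_mul (-(2 * b)⁻¹)
      rw [mul_zero] at this
      refine this.congr fun x => by ring
    have hint : IntegrableOn
        (fun x : ℝ => x ^ 2 * Real.exp (-b * x ^ 2) - (2 * b)⁻¹ * Real.exp (-b * x ^ 2))
        (Ioi 0) :=
      ((integrable_sq_mul_exp hb).sub ((integrable_exp_neg_mul_sq hb).const_mul _)).integrableOn
    have := integral_Ioi_of_hasDerivAt_of_tendsto' (a := (0:ℝ)) (fun x _ => A x) hint B
    rw [this]
    simp
  have hsub := integral_sub ((integrable_sq_mul_exp hb).integrableOn)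
    (((integrable_exp_neg_mul_sq hb).const_mul ((2 * b)⁻¹)).integrableOn) (μ := volume.restrict (Ioi 0))
  rw [hsub] at key
  have h2 : ∫ x in Ioi (0:ℝ), (2 * b)⁻¹ * Real.exp (-b * x ^ 2)
      = (2 * b)⁻¹ * (Real.sqrt (Real.pi / b) / 2) := by
    rw [integral_const_mul, integral_gaussian_Ioi]
  linarith [key, h2.symm ▸ key]


lemma hb_pos {σ : ℝ} (hσ : 0 < σ) : 0 < (2 * σ ^ 2)⁻¹ := by positivity

lemma nd_eq {σ : ℝ} (y : ℝ) :
    normalDensity σ y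
      = (1 / (σ * Real.sqrt (2 * Real.pi))) * Real.exp (-(2 * σ ^ 2)⁻¹ * y ^ 2) := by
  unfold normalDensity
  congr 2
  ring

lemma sqrt_pi_div {σ : ℝ} (hσ : 0 < σ) :
    Real.sqrt (Real.pi / (2 * σ ^ 2)⁻¹) = σ * Real.sqrt (2 * Real.pi) := by
  rw [div_eq_mul_inv, inv_inv, show Real.pi * (2 * σ ^ 2) = σ ^ 2 * (2 * Real.pi) by ring,
    Real.sqrt_mul (sq_nonneg σ), Real.sqrt_sq hσ.le]

lemma integrable_mul_nd {σ : ℝ} (g : ℝ → ℝ)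
    (hg : Integrable fun y : ℝ => g y * Real.exp (-(2 * σ ^ 2)⁻¹ * y ^ 2)) :
    Integrable fun y : ℝ => g y * normalDensity σ y := by
  refine (hg.const_mul (1 / (σ * Real.sqrt (2 * Real.pi)))).congr
    (Filter.Eventually.of_forall fun y => ?_)
  simp only [nd_eq]
  ring

lemma integrable_nd {σ : ℝ} (hσ : 0 < σ) :
    Integrable fun y : ℝ => normalDensity σ y := by
  have := integrable_mul_nd (σ := σ) (fun _ => (1:ℝ))
    (by simpa using integrable_exp_neg_mul_sq (hb_pos hσ))
  simpa using this

lemma integrable_id_mul_nd {σ : ℝ} (hσ : 0 < σ) :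
    Integrable fun y : ℝ => y * normalDensity σ y :=
  integrable_mul_nd _ (integrable_mul_exp_neg_mul_sq (hb_pos hσ))

lemma integrable_sq_mul_nd {σ : ℝ} (hσ : 0 < σ) :
    Integrable fun y : ℝ => y ^ 2 * normalDensity σ y :=
  integrable_mul_nd _ (integrable_sq_mul_exp (hb_pos hσ))

lemma nd_Ioi {σ : ℝ} (hσ : 0 < σ) :
    ∫ y in Ioi (0:ℝ), normalDensity σ y = 1 / 2 := by
  have hne : σ * Real.sqrt (2 * Real.pi) ≠ 0 := by positivity
  simp_rw [nd_eq]
  rw [integral_const_mul, integral_gaussian_Ioi, sqrt_pi_div hσ]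
  field_simp

lemma nd_id_Ioi {σ : ℝ} (hσ : 0 < σ) :
    ∫ y in Ioi (0:ℝ), y * normalDensity σ y = σ / Real.sqrt (2 * Real.pi) := by
  have hs : (0:ℝ) < Real.sqrt (2 * Real.pi) := Real.sqrt_pos.2 (by positivity)
  have : ∀ y : ℝ, y * normalDensity σ y
      = (1 / (σ * Real.sqrt (2 * Real.pi))) * (y * Real.exp (-(2 * σ ^ 2)⁻¹ * y ^ 2)) := by
    intro y; rw [nd_eq]; ring
  simp_rw [this]
  rw [integral_const_mul, integral_mul_exp_Ioi (hb_pos hσ)]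
  rw [show (2 * (2 * σ ^ 2)⁻¹)⁻¹ = σ ^ 2 by rw [mul_inv, inv_inv]; ring]
  field_simp

lemma nd_sq_Ioi {σ : ℝ} (hσ : 0 < σ) :
    ∫ y in Ioi (0:ℝ), y ^ 2 * normalDensity σ y = σ ^ 2 / 2 := by
  have hne : σ * Real.sqrt (2 * Real.pi) ≠ 0 := by positivity
  have : ∀ y : ℝ, y ^ 2 * normalDensity σ y
      = (1 / (σ * Real.sqrt (2 * Real.pi))) * (y ^ 2 * Real.exp (-(2 * σ ^ 2)⁻¹ * y ^ 2)) := by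
    intro y; rw [nd_eq]; ring
  simp_rw [this]
  rw [integral_const_mul, integral_sq_mul_exp_Ioi (hb_pos hσ), sqrt_pi_div hσ]
  rw [show (2 * (2 * σ ^ 2)⁻¹)⁻¹ = σ ^ 2 by rw [mul_inv, inv_inv]; ring]
  field_simp

lemma nd_neg {σ : ℝ} (y : ℝ) : normalDensity σ (-y) = normalDensity σ y := by
  unfold normalDensity
  rw [neg_pow]
  norm_num

lemma nd_Iio {σ : ℝ} (hσ : 0 < σ) :
    ∫ y in Iio (0:ℝ), normalDensity σ y = 1 / 2 := by
  have h := integral_comp_neg_Iic (0:ℝ) (fun x => normalDensity σ x)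
  simp only [nd_neg, neg_zero] at h
  rw [← integral_Iic_eq_integral_Iio, h, nd_Ioi hσ]

lemma nd_id_Iio {σ : ℝ} (hσ : 0 < σ) :
    ∫ y in Iio (0:ℝ), y * normalDensity σ y = -(σ / Real.sqrt (2 * Real.pi)) := by
  have h := integral_comp_neg_Iic (0:ℝ) (fun x => x * normalDensity σ x)
  rw [neg_zero] at h
  have h2 : (∫ x in Iic (0:ℝ), (fun x => x * normalDensity σ x) (-x))
      = -∫ x in Iic (0:ℝ), x * normalDensity σ x := by
    rw [← integral_neg]
    refine setIntegral_congr_fun measurableSet_Iic fun y _ => ?_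
    simp [nd_neg]
  rw [h2] at h
  have h3 := nd_id_Ioi hσ
  rw [← integral_Iic_eq_integral_Iio]
  linarith

lemma nd_sq_Iio {σ : ℝ} (hσ : 0 < σ) :
    ∫ y in Iio (0:ℝ), y ^ 2 * normalDensity σ y = σ ^ 2 / 2 := by
  have h := integral_comp_neg_Iic (0:ℝ) (fun x => x ^ 2 * normalDensity σ x)
  simp only [nd_neg, neg_zero, even_two, Even.neg_pow] at h
  rw [← integral_Iic_eq_integral_Iio, h, nd_sq_Ioi hσ]

lemma osc_integral (σlo σhi : ℝ) (hσlo : 0 < σlo) (hσhi : 0 < σhi) (g : ℝ → ℝ)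
    (hlo : Integrable fun y => g y * normalDensity σlo y)
    (hhi : Integrable fun y => g y * normalDensity σhi y) :
    ∫ y, g y * oscDensityZero σlo σhi y
      = (2 * σlo / (σhi + σlo)) * (∫ y in Iio (0:ℝ), g y * normalDensity σhi y)
        + (2 * σhi / (σhi + σlo)) * (∫ y in Ioi (0:ℝ), g y * normalDensity σlo y) := by
  have hIci : EqOn (fun y : ℝ => (2 * σhi / (σhi + σlo)) * (g y * normalDensity σlo y))
      (fun y => g y * oscDensityZero σlo σhi y) (Ici 0) := fun y hy => by
    simp only [oscDensityZero, if_pos (mem_Ici.mp hy)]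
    ring
  have hIio : EqOn (fun y : ℝ => (2 * σlo / (σhi + σlo)) * (g y * normalDensity σhi y))
      (fun y => g y * oscDensityZero σlo σhi y) (Iio 0) := fun y hy => by
    simp only [oscDensityZero, if_neg (not_le.mpr (mem_Iio.mp hy))]
    ring
  rw [← intervalIntegral.integral_Iio_add_Ici (μ := volume) (b := (0:ℝ))
      (((hhi.const_mul _).integrableOn).congr_fun hIio measurableSet_Iio)
      (((hlo.const_mul _).integrableOn).congr_fun hIci measurableSet_Ici)]
  rw [← setIntegral_congr_fun measurableSet_Iio hIio,
      ← setIntegral_congr_fun measurableSet_Ici hIci,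
      integral_const_mul, integral_const_mul, integral_Ici_eq_integral_Ioi]

/-- **Lemma (moments of the oscillating-normal density with zero threshold).**
For `0 < σ̲ ≤ σ̄`, the density `q` (low-variance normal on gains, high-variance
normal on losses, suitably reweighted) integrates to one, has zero mean, and
has variance `σ̲·σ̄`. -/
theorem oscDensityZero_moments (σlo σhi : ℝ) (hσlo : 0 < σlo) (hσ : σlo ≤ σhi) :
    (∫ y, oscDensityZero σlo σhi y) = 1 ∧
    (∫ y, y * oscDensityZero σlo σhi y) = 0 ∧
    (∫ y, y ^ 2 * oscDensityZero σlo σhi y) = σlo * σhi := by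
  have hσhi : 0 < σhi := lt_of_lt_of_le hσlo hσ
  have hsum : (0:ℝ) < σhi + σlo := by linarith
  have hs : (0:ℝ) < Real.sqrt (2 * Real.pi) := Real.sqrt_pos.2 (by positivity)
  refine ⟨?_, ?_, ?_⟩
  · have m0 := osc_integral σlo σhi hσlo hσhi (fun _ => 1)
      (by simpa using integrable_nd hσlo) (by simpa using integrable_nd hσhi)
    simp only [one_mul] at m0
    rw [m0, nd_Iio hσhi, nd_Ioi hσlo]
    field_simp
    ring
  · have m1 := osc_integral σlo σhi hσlo hσhi (fun y => y)
      (integrable_id_mul_nd hσlo) (integrable_id_mul_nd hσhi)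
    rw [m1, nd_id_Iio hσhi, nd_id_Ioi hσlo]
    field_simp
    ring
  · have m2 := osc_integral σlo σhi hσlo hσhi (fun y => y ^ 2)
      (integrable_sq_mul_nd hσlo) (integrable_sq_mul_nd hσhi)
    rw [m2, nd_sq_Iio hσhi, nd_sq_Ioi hσlo]
    field_simp

end LAB
end
end

section
/- Let σ > 0, m > 0, and let φ₁ : [0,∞) → ℝ be bounded, strictly increasing, strictly concave, with φ₁(0) = 0. Then ∫_0^∞ φ₁(y) · (exp(−(y−m)²/(2σ²)) − exp(−(y+m)²/(2σ²)))/(σ√(2π)) dy < φ₁(m). -/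
open MeasureTheory Real Set

noncomputable section

namespace LAB

/-- The centered Gaussian density with standard deviation `σ`. -/
def gau (σ x : ℝ) : ℝ := Real.exp (-x ^ 2 / (2 * σ ^ 2)) / (σ * Real.sqrt (2 * π))

lemma gau_pos {σ : ℝ} (hσ : 0 < σ) (x : ℝ) : 0 < gau σ x := by
  unfold gau; positivity

lemma gau_even {σ : ℝ} (x : ℝ) : gau σ (-x) = gau σ x := by
  unfold gau; rw [neg_pow]; ring_nf

lemma gexp {σ : ℝ} (hσ : 0 < σ) (x : ℝ) :
    Real.exp (-x ^ 2 / (2 * σ ^ 2)) = Real.exp (-(1 / (2 * σ ^ 2)) * x ^ 2) := by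
  congr 1; field_simp

lemma g_integrable {σ : ℝ} (hσ : 0 < σ) : Integrable (gau σ) := by
  have h : Integrable (fun x : ℝ => Real.exp (-(1 / (2 * σ ^ 2)) * x ^ 2)) :=
    integrable_exp_neg_mul_sq (by positivity)
  unfold gau
  simpa only [← gexp hσ] using h.div_const (σ * Real.sqrt (2 * π))

lemma xg_integrable {σ : ℝ} (hσ : 0 < σ) : Integrable (fun x : ℝ => x * gau σ x) := by
  have h : Integrable (fun x : ℝ => x * Real.exp (-(1 / (2 * σ ^ 2)) * x ^ 2)) :=
    integrable_mul_exp_neg_mul_sq (by positivity)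
  have := h.div_const (σ * Real.sqrt (2 * π))
  unfold gau
  simpa only [← gexp hσ, mul_div_assoc] using this

lemma g_integral {σ : ℝ} (hσ : 0 < σ) : ∫ x : ℝ, gau σ x = 1 := by
  unfold gau
  rw [integral_div]
  have h : ∫ x : ℝ, Real.exp (-x ^ 2 / (2 * σ ^ 2)) = Real.sqrt (π / (1 / (2 * σ ^ 2))) := by
    simp_rw [gexp hσ]; exact integral_gaussian _
  rw [h]
  have h2 : π / (1 / (2 * σ ^ 2)) = σ ^ 2 * (2 * π) := by field_simp
  rw [h2, Real.sqrt_mul (by positivity), Real.sqrt_sq hσ.le]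
  field_simp

lemma xg_integral {σ : ℝ} (hσ : 0 < σ) : ∫ x : ℝ, x * gau σ x = 0 := by
  set h : ℝ → ℝ := fun x => x * gau σ x with hh
  have hodd : ∀ x, h (-x) = - h x := by
    intro x; simp only [hh]; rw [gau_even]; ring
  have h1 : ∫ x : ℝ, h (-x) = ∫ x : ℝ, h x := integral_neg_eq_self h _
  have h2 : ∫ x : ℝ, h (-x) = - ∫ x : ℝ, h x := by
    simp_rw [hodd]; exact integral_neg h
  linarith [h1, h2]

lemma G_integrable {σ : ℝ} (hσ : 0 < σ) (m : ℝ) : Integrable (fun y : ℝ => gau σ (y - m)) :=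
  (g_integrable hσ).comp_sub_right m

lemma yG_integrable {σ : ℝ} (hσ : 0 < σ) (m : ℝ) :
    Integrable (fun y : ℝ => y * gau σ (y - m)) := by
  have h1 : Integrable (fun y : ℝ => (y - m) * gau σ (y - m)) :=
    (xg_integrable hσ).comp_sub_right m
  have h2 := ((g_integrable hσ).comp_sub_right m).const_mul m
  have := h1.add h2
  refine this.congr (Filter.Eventually.of_forall fun y => ?_)
  simp only [Pi.add_apply]; ring

lemma G_integral {σ : ℝ} (hσ : 0 < σ) (m : ℝ) : ∫ y : ℝ, gau σ (y - m) = 1 := by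
  rw [integral_sub_right_eq_self (fun x => gau σ x) m]; exact g_integral hσ

lemma yG_integral {σ : ℝ} (hσ : 0 < σ) (m : ℝ) : ∫ y : ℝ, y * gau σ (y - m) = m := by
  have h := integral_add_right_eq_self (μ := volume) (fun y : ℝ => y * gau σ (y - m)) m
  simp only [add_sub_cancel_right] at h
  rw [← h]
  have : ∫ u : ℝ, (u + m) * gau σ u
      = (∫ u : ℝ, u * gau σ u) + m * ∫ u : ℝ, gau σ u := by
    rw [← integral_const_mul, ← integral_add (xg_integrable hσ) ((g_integrable hσ).const_mul m)]
    congr 1; funext u; ring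
  rw [this, xg_integral hσ, g_integral hσ]; ring

lemma split_line (f : ℝ → ℝ) (hf : Integrable f) :
    (∫ y in Iic (0:ℝ), f y) + (∫ y in Ioi (0:ℝ), f y) = ∫ y, f y :=
  intervalIntegral.integral_Iic_add_Ioi hf.integrableOn hf.integrableOn

lemma F_lt_one {σ m : ℝ} (hσ : 0 < σ) :
    (∫ y in Ioi (0:ℝ), (gau σ (y - m) - gau σ (y + m))) < 1 := by
  have hrefl : (∫ y in Ioi (0:ℝ), gau σ (y + m)) = ∫ y in Iic (0:ℝ), gau σ (y - m) := by
    have := integral_comp_neg_Ioi (0:ℝ) (fun y => gau σ (y - m))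
    simp only [neg_zero] at this
    rw [← this]
    refine setIntegral_congr_fun measurableSet_Ioi fun y _ => ?_
    rw [← gau_even (x := y + m)]; ring_nf
  have hint : IntegrableOn (fun y => gau σ (y - m)) (Ioi 0) := (G_integrable hσ m).integrableOn
  have hint2 : IntegrableOn (fun y => gau σ (y + m)) (Ioi 0) :=
    ((g_integrable hσ).comp_add_right m).integrableOn
  rw [integral_sub hint hint2, hrefl]
  have hsplit := split_line (fun y => gau σ (y - m)) (G_integrable hσ m)
  rw [G_integral hσ m] at hsplit
  have hpos : 0 < ∫ y in Iic (0:ℝ), gau σ (y - m) := by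
    rw [setIntegral_pos_iff_support_of_nonneg_ae]
    · have : Function.support (fun y => gau σ (y - m)) = univ := by
        ext y; simp [Function.mem_support, (gau_pos hσ (y - m)).ne']
      rw [this, univ_inter]
      simp
    · exact Filter.Eventually.of_forall fun y => (gau_pos hσ _).le
    · exact (G_integrable hσ m).integrableOn
  linarith

lemma yf_integrable {σ m : ℝ} (hσ : 0 < σ) :
    Integrable (fun y : ℝ => y * gau σ (y + m)) := by
  have := yG_integrable hσ (-m)
  refine this.congr (Filter.Eventually.of_forall fun y => ?_)
  simp only [sub_neg_eq_add]

lemma M_eq {σ m : ℝ} (hσ : 0 < σ) :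
    (∫ y in Ioi (0:ℝ), y * (gau σ (y - m) - gau σ (y + m))) = m := by
  have hint : IntegrableOn (fun y => y * gau σ (y - m)) (Ioi 0) := (yG_integrable hσ m).integrableOn
  have hyplus : Integrable (fun y : ℝ => y * gau σ (y + m)) := yf_integrable hσ
  have hrefl : (∫ y in Ioi (0:ℝ), y * gau σ (y + m))
      = - ∫ y in Iic (0:ℝ), y * gau σ (y - m) := by
    have := integral_comp_neg_Ioi (0:ℝ) (fun y => y * gau σ (y - m))
    simp only [neg_zero] at this
    rw [← this, ← integral_neg]
    refine setIntegral_congr_fun measurableSet_Ioi fun y _ => ?_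
    show y * gau σ (y + m) = -(-y * gau σ (-y - m))
    rw [show -y - m = -(y + m) by ring, gau_even]
    ring
  have hexp : (∫ y in Ioi (0:ℝ), y * (gau σ (y - m) - gau σ (y + m)))
      = (∫ y in Ioi (0:ℝ), y * gau σ (y - m)) - ∫ y in Ioi (0:ℝ), y * gau σ (y + m) := by
    rw [← integral_sub hint hyplus.integrableOn]
    refine setIntegral_congr_fun measurableSet_Ioi fun y _ => ?_
    ring
  rw [hexp, hrefl, sub_neg_eq_add, add_comm, split_line _ (yG_integrable hσ m), yG_integral hσ m]

lemma support_line (m : ℝ) (hm : 0 < m) (φ₁ : ℝ → ℝ) (hφ₁0 : φ₁ 0 = 0)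
    (hconc : StrictConcaveOn ℝ (Set.Ici 0) φ₁) :
    ∃ c : ℝ, c * m < φ₁ m ∧ ∀ y ∈ Ici (0:ℝ), φ₁ y ≤ φ₁ m + c * (y - m) := by
  set h : ℝ := m / 2 with hh
  have hhpos : 0 < h := by positivity
  have hhm : h < m := by simp [hh]; linarith
  set K : ℝ := (φ₁ m - φ₁ h) / (m - h) with hK
  set S : Set ℝ := (fun y => (φ₁ y - φ₁ m) / (y - m)) '' Ioi m with hS
  have hmem : ∀ y ∈ Ioi m, (φ₁ y - φ₁ m) / (y - m) ∈ S := fun y hy => ⟨y, hy, rfl⟩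
  have hne : S.Nonempty := ⟨_, hmem (m + 1) (mem_Ioi.mpr (by linarith))⟩
  have hub : ∀ s ∈ S, s ≤ K := by
    rintro s ⟨y, hy, rfl⟩
    exact hconc.concaveOn.slope_anti_adjacent (mem_Ici.mpr hhpos.le)
      (mem_Ici.mpr ((hm.trans hy).le)) hhm hy
  have hbdd : BddAbove S := ⟨K, hub⟩
  set c : ℝ := sSup S with hc
  have hcK : c ≤ K := csSup_le hne hub
  refine ⟨c, ?_, ?_⟩
  · have hstrict : K < (φ₁ h - φ₁ 0) / (h - 0) :=
      hconc.slope_anti_adjacent (mem_Ici.mpr le_rfl) (mem_Ici.mpr hm.le) hhpos hhm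
    rw [hφ₁0, sub_zero, sub_zero] at hstrict
    have e2 : K * h < φ₁ h := by
      have := mul_lt_mul_of_pos_right hstrict hhpos
      rwa [div_mul_cancel₀ _ hhpos.ne'] at this
    have e1 : K * (m - h) = φ₁ m - φ₁ h := by
      rw [hK, div_mul_cancel₀ _ (by linarith : m - h ≠ 0)]
    have e3 : c * m ≤ K * m := mul_le_mul_of_nonneg_right hcK hm.le
    have e4 : m = 2 * h := by rw [hh]; ring
    nlinarith [e1, e2, e3]
  · intro y hy
    rcases lt_trichotomy y m with hlt | heq | hgt
    · have hcle : c ≤ (φ₁ m - φ₁ y) / (m - y) := by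
        refine csSup_le hne ?_
        rintro s ⟨z, hz, rfl⟩
        exact hconc.concaveOn.slope_anti_adjacent hy (mem_Ici.mpr ((hm.trans hz).le)) hlt hz
      have := mul_le_mul_of_nonneg_right hcle (le_of_lt (by linarith : (0:ℝ) < m - y))
      rw [div_mul_cancel₀ _ (by linarith : m - y ≠ 0)] at this
      nlinarith [this]
    · subst heq; simp
    · have hle : (φ₁ y - φ₁ m) / (y - m) ≤ c := le_csSup hbdd (hmem y hgt)
      have := mul_le_mul_of_nonneg_right hle (le_of_lt (by linarith : (0:ℝ) < y - m))
      rw [div_mul_cancel₀ _ (by linarith : y - m ≠ 0)] at this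
      linarith

/-- **Lemma (strict Jensen-type inequality for the folded Gaussian weight).**
For `σ > 0`, `m > 0` and `φ₁` bounded, strictly increasing and strictly concave
on `[0,∞)` with `φ₁(0) = 0`,
`∫₀^∞ φ₁(y)·(exp(−(y−m)²/2σ²) − exp(−(y+m)²/2σ²))/(σ√(2π)) dy < φ₁(m)`. -/
theorem folded_gaussian_jensen (σ m : ℝ) (hσ : 0 < σ) (hm : 0 < m)
    (φ₁ : ℝ → ℝ) (hφ₁0 : φ₁ 0 = 0)
    (hbdd : ∃ C : ℝ, ∀ x ∈ Set.Ici (0 : ℝ), |φ₁ x| ≤ C)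
    (hmono : StrictMonoOn φ₁ (Set.Ici 0))
    (hconc : StrictConcaveOn ℝ (Set.Ici 0) φ₁) :
    (∫ y in Set.Ioi (0 : ℝ), φ₁ y *
        ((Real.exp (-(y - m) ^ 2 / (2 * σ ^ 2)) -
          Real.exp (-(y + m) ^ 2 / (2 * σ ^ 2))) / (σ * Real.sqrt (2 * Real.pi))))
      < φ₁ m := by
  obtain ⟨C, hC⟩ := hbdd
  obtain ⟨c, hcm, hsupp⟩ := support_line m hm φ₁ hφ₁0 hconc
  set f : ℝ → ℝ := fun y => gau σ (y - m) - gau σ (y + m) with hf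
  -- rewrite the integrand using `gau`
  have hrw : (fun y => φ₁ y *
        ((Real.exp (-(y - m) ^ 2 / (2 * σ ^ 2)) -
          Real.exp (-(y + m) ^ 2 / (2 * σ ^ 2))) / (σ * Real.sqrt (2 * Real.pi))))
      = fun y => φ₁ y * f y := by
    funext y; simp only [hf, gau, sub_div]
  rw [hrw]
  -- positivity of f on Ioi 0
  have hfpos : ∀ y ∈ Ioi (0:ℝ), 0 ≤ f y := by
    intro y hy
    have hy' : 0 < y := hy
    have hnum : (-(y + m) ^ 2 : ℝ) ≤ -(y - m) ^ 2 := by nlinarith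
    have hlt : (-(y + m) ^ 2) / (2 * σ ^ 2) ≤ (-(y - m) ^ 2) / (2 * σ ^ 2) :=
      (div_le_div_iff_of_pos_right (by positivity)).mpr hnum
    have hexp : Real.exp (-(y + m) ^ 2 / (2 * σ ^ 2)) ≤ Real.exp (-(y - m) ^ 2 / (2 * σ ^ 2)) :=
      Real.exp_le_exp.mpr hlt
    have hgau : gau σ (y + m) ≤ gau σ (y - m) := by
      unfold gau
      exact (div_le_div_iff_of_pos_right (by positivity)).mpr hexp
    simp only [hf]
    linarith
  -- integrability
  have hf_int : Integrable f :=
    (G_integrable hσ m).sub ((g_integrable hσ).comp_add_right m)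
  have hyf_int : Integrable (fun y => y * f y) := by
    have := (yG_integrable hσ m).sub (yf_integrable (m := m) hσ)
    refine this.congr (Filter.Eventually.of_forall fun y => ?_)
    simp only [Pi.sub_apply, hf]; ring
  -- ψ is a measurable globally bounded extension of φ₁
  set ψ : ℝ → ℝ := fun y => φ₁ (max y 0) with hψ
  have hψmono : Monotone ψ := fun a b hab =>
    (hmono.monotoneOn) (mem_Ici.mpr (le_max_right a 0)) (mem_Ici.mpr (le_max_right b 0))
      (max_le_max hab le_rfl)
  have hψbdd : ∀ x, ‖ψ x‖ ≤ C := fun x => by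
    rw [Real.norm_eq_abs]; exact hC _ (mem_Ici.mpr (le_max_right x 0))
  have hψf_int : IntegrableOn (fun y => ψ y * f y) (Ioi 0) :=
    Integrable.bdd_mul hf_int.integrableOn
      (hψmono.measurable.aestronglyMeasurable) (Filter.Eventually.of_forall hψbdd)
  have haeeq : (fun y => ψ y * f y) =ᵐ[volume.restrict (Ioi 0)] fun y => φ₁ y * f y := by
    filter_upwards [self_mem_ae_restrict measurableSet_Ioi] with y hy
    simp only [hψ]
    rw [max_eq_left (le_of_lt hy)]
  have hφf_int : IntegrableOn (fun y => φ₁ y * f y) (Ioi 0) := hψf_int.congr haeeq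
  -- the affine majorant and its integral
  have hR_int : IntegrableOn (fun y => (φ₁ m + c * (y - m)) * f y) (Ioi 0) := by
    have h1 : Integrable (fun y => (φ₁ m + c * (y - m)) * f y) := by
      have := ((hf_int.const_mul (φ₁ m)).add (hyf_int.const_mul c)).sub
        (hf_int.const_mul (c * m))
      refine this.congr (Filter.Eventually.of_forall fun y => ?_)
      simp only [Pi.sub_apply, Pi.add_apply]; ring
    exact h1.integrableOn
  have hmono_int : (∫ y in Ioi (0:ℝ), φ₁ y * f y)
      ≤ ∫ y in Ioi (0:ℝ), (φ₁ m + c * (y - m)) * f y := by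
    refine setIntegral_mono_on hφf_int hR_int measurableSet_Ioi fun y hy => ?_
    exact mul_le_mul_of_nonneg_right (hsupp y (mem_Ici.mpr (le_of_lt hy))) (hfpos y hy)
  -- compute the right-hand side
  set F : ℝ := ∫ y in Ioi (0:ℝ), f y with hF
  have hFlt : F < 1 := F_lt_one hσ
  have hM : (∫ y in Ioi (0:ℝ), y * f y) = m := M_eq hσ
  have hRcalc : (∫ y in Ioi (0:ℝ), (φ₁ m + c * (y - m)) * f y)
      = φ₁ m * F + c * m - c * m * F := by
    have hsplit : (fun y => (φ₁ m + c * (y - m)) * f y)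
        = fun y => (φ₁ m * f y + c * (y * f y)) - (c * m) * f y := by
      funext y; ring
    have ia : IntegrableOn (fun y => φ₁ m * f y) (Ioi 0) := hf_int.integrableOn.const_mul _
    have ib : IntegrableOn (fun y => c * (y * f y)) (Ioi 0) := hyf_int.integrableOn.const_mul _
    have i2 : IntegrableOn (fun y => c * m * f y) (Ioi 0) := hf_int.integrableOn.const_mul _
    have i1 : IntegrableOn (fun y => φ₁ m * f y + c * (y * f y)) (Ioi 0) := ia.add ib
    rw [hsplit, integral_sub i1 i2, integral_add ia ib,
      integral_const_mul, integral_const_mul, integral_const_mul, hM, ← hF]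
  have hfinal : φ₁ m * F + c * m - c * m * F < φ₁ m := by nlinarith [hcm, hFlt]
  calc (∫ y in Ioi (0:ℝ), φ₁ y * f y)
      ≤ ∫ y in Ioi (0:ℝ), (φ₁ m + c * (y - m)) * f y := hmono_int
    _ = φ₁ m * F + c * m - c * m * F := hRcalc
    _ < φ₁ m := hfinal

end LAB
end
end

section
/- Let P* be the no-learning switching measure. Then for every N ≥ 1: P*(∩_{n=N}^∞ {Σ_{i=1}^n X_i ≤ 0}) ≤ σ̄/(σ̄+σ̲) < 1 and P*(∩_{n=N}^∞ {Σ_{i=1}^n X_i > 0}) ≤ σ̄/(σ̄+σ̲) < 1; that is, under P*, with probability at least σ̲/(σ̄+σ̲) the running sum does not stay forever in the region of cumulative losses (respectively gains) after time N. -/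
open MeasureTheory Filter Real Set
open scoped ENNReal NNReal Topology

noncomputable section

namespace LAB

/-- `P` is the no-learning switching measure: the probability measure on
`Ω = Ω̄^ℕ` (characterized by its values on cylinders) built by the
Ionescu–Tulcea construction from the one-step-ahead conditionals that use the
high-variance law `μhi` when the running sum of past outcomes is `≤ 0` and the
low-variance law `μlo` when it is `> 0`. -/
def IsSwitchMeasure (Obar : Finset ℝ) (μlo μhi : Measure ↥Obar)
    (P : Measure (ℕ → ↥Obar)) : Prop :=
  IsProbabilityMeasure P ∧
  ∀ n : ℕ, ∀ x : ℕ → ↥Obar,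
    P {ω | ∀ i < n, ω i = x i} =
      ∏ i ∈ Finset.range n,
        (if ∑ j ∈ Finset.range i, (x j : ℝ) ≤ 0 then μhi {x i} else μlo {x i})

variable (Obar : Finset ℝ)

/-- Restriction to the first `n` coordinates. -/
def res (n : ℕ) : (ℕ → ↥Obar) → (Fin n → ↥Obar) := fun ω i => ω i

/-- The cylinder (atom) determined by the first `n` coordinates. -/
def Atom (n : ℕ) (x : Fin n → ↥Obar) : Set (ℕ → ↥Obar) := res Obar n ⁻¹' {x}

/-- The running-sum process. -/
def Sn (n : ℕ) : (ℕ → ↥Obar) → ℝ := fun ω => ∑ i ∈ Finset.range n, (ω i : ℝ)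

lemma measurable_res (n : ℕ) : Measurable (res Obar n) :=
  measurable_pi_lambda _ (fun i => measurable_pi_apply _)

lemma measurableSet_atom (n : ℕ) (x : Fin n → ↥Obar) : MeasurableSet (Atom Obar n x) :=
  measurable_res Obar n (measurableSet_singleton x)

/-- The natural filtration of the coordinate process. -/
def coordFiltration : Filtration ℕ (inferInstance : MeasurableSpace (ℕ → ↥Obar)) where
  seq n := MeasurableSpace.comap (res Obar n) ⊤
  mono' := by
    intro n m hnm
    rintro s ⟨T, -, rfl⟩
    refine ⟨(fun z (i : Fin n) => z (Fin.castLE hnm i)) ⁻¹' T, trivial, ?_⟩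
    rw [← Set.preimage_comp]
    rfl
  le' := by
    intro n
    rintro s ⟨T, -, rfl⟩
    exact measurable_res Obar n (Set.toFinite T).measurableSet

lemma measurable_res_coord (n : ℕ) :
    @Measurable _ _ (coordFiltration Obar n) ⊤ (res Obar n) := by
  intro s _
  exact ⟨s, trivial, rfl⟩

lemma Sn_eq_comp (n m : ℕ) (hnm : n ≤ m) :
    Sn Obar n = fun ω => (∑ i : Fin n, ((res Obar m ω) (Fin.castLE hnm i) : ℝ)) := by
  funext ω
  rw [Sn, Finset.sum_range fun i => ((ω i : ℝ))]
  rfl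

lemma stronglyMeasurable_Sn (n : ℕ) :
    @StronglyMeasurable _ _ _ (coordFiltration Obar n) (Sn Obar n) := by
  have : Sn Obar n = (fun x : Fin n → ↥Obar => ∑ i : Fin n, ((x (Fin.castLE le_rfl i)) : ℝ))
      ∘ (res Obar n) := by
    rw [Sn_eq_comp Obar n n le_rfl]; rfl
  rw [this]
  exact ((measurable_from_top).comp (measurable_res_coord Obar n)).stronglyMeasurable

lemma adapted_Sn : StronglyAdapted (coordFiltration Obar) (Sn Obar) :=
  fun n => stronglyMeasurable_Sn Obar n

lemma measurable_Sn (n : ℕ) : Measurable (Sn Obar n) := by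
  apply Finset.measurable_sum
  intro i _
  exact measurable_subtype_coe.comp (measurable_pi_apply i)

lemma abs_Sn_le (n : ℕ) (ω : ℕ → ↥Obar) :
    |Sn Obar n ω| ≤ n * ((Obar.sup fun x => ‖x‖₊ : ℝ≥0) : ℝ) := by
  refine (Finset.abs_sum_le_sum_abs _ _).trans ?_
  have : ∀ i ∈ Finset.range n, |((ω i : ℝ))| ≤ ((Obar.sup fun x => ‖x‖₊ : ℝ≥0) : ℝ) := by
    intro i _
    rw [← Real.norm_eq_abs, ← coe_nnnorm]
    exact NNReal.coe_le_coe.mpr (Finset.le_sup (ω i).2)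
  calc ∑ i ∈ Finset.range n, |((ω i : ℝ))|
      ≤ ∑ _i ∈ Finset.range n, ((Obar.sup fun x => ‖x‖₊ : ℝ≥0) : ℝ) :=
        Finset.sum_le_sum this
    _ = n * _ := by rw [Finset.sum_const, Finset.card_range, nsmul_eq_mul]

variable {Obar} {μlo μhi : Measure ↥Obar} {P : Measure (ℕ → ↥Obar)}

lemma integrable_Sn [IsProbabilityMeasure P] (n : ℕ) :
    Integrable (Sn Obar n) P := by
  refine ⟨(measurable_Sn Obar n).aestronglyMeasurable, HasFiniteIntegral.of_bounded
    (C := n * ((Obar.sup fun x => ‖x‖₊ : ℝ≥0) : ℝ)) (ae_of_all _ fun ω => ?_)⟩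
  rw [Real.norm_eq_abs]
  exact abs_Sn_le Obar n ω

lemma atom_eq (n : ℕ) (x : Fin n → ↥Obar) (x' : ℕ → ↥Obar) (hx : ∀ i : Fin n, x' i = x i) :
    Atom Obar n x = {ω | ∀ i < n, ω i = x' i} := by
  ext ω
  simp only [Atom, res, Set.mem_preimage, Set.mem_singleton_iff, funext_iff, Set.mem_setOf_eq]
  constructor
  · intro h i hi
    rw [hx ⟨i, hi⟩]; exact h ⟨i, hi⟩
  · intro h i
    rw [← hx i]; exact h i i.isLt

lemma measure_atom_snoc [Nonempty ↥Obar] (hP : IsSwitchMeasure Obar μlo μhi P)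
    (n : ℕ) (y : Fin n → ↥Obar) (v : ↥Obar) :
    P (Atom Obar (n + 1) (Fin.snoc y v)) =
      P (Atom Obar n y) *
        (if (∑ i : Fin n, (y i : ℝ)) ≤ 0 then μhi {v} else μlo {v}) := by
  classical
  set x' : ℕ → ↥Obar := fun i =>
    if h : i < n + 1 then (Fin.snoc y v : Fin (n + 1) → ↥Obar) ⟨i, h⟩
      else Classical.arbitrary _ with hx'
  have h1 : ∀ i : Fin (n + 1), x' i = (Fin.snoc y v : Fin (n + 1) → ↥Obar) i := by
    intro i
    simp only [hx', i.isLt, dif_pos, Fin.eta]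
  have h2 : ∀ i : Fin n, x' i = y i := by
    intro i
    have hi : (i : ℕ) < n + 1 := Nat.lt_succ_of_lt i.isLt
    have : (⟨(i : ℕ), hi⟩ : Fin (n + 1)) = Fin.castSucc i := by
      ext; rfl
    simp only [hx', dif_pos hi, this, Fin.snoc_castSucc]
  have hxn : x' n = v := by
    have : (⟨n, Nat.lt_succ_self n⟩ : Fin (n + 1)) = Fin.last n := rfl
    simp only [hx', dif_pos (Nat.lt_succ_self n), this, Fin.snoc_last]
  have e1 : Atom Obar (n + 1) (Fin.snoc y v) = {ω | ∀ i < n + 1, ω i = x' i} :=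
    atom_eq _ _ x' h1
  have e2 : Atom Obar n y = {ω | ∀ i < n, ω i = x' i} :=
    atom_eq _ _ x' h2
  rw [e1, e2, hP.2 (n + 1) x', hP.2 n x', Finset.prod_range_succ]
  congr 1
  have hsum : ∑ j ∈ Finset.range n, (x' j : ℝ) = ∑ i : Fin n, (y i : ℝ) := by
    rw [Finset.sum_range fun j => (x' j : ℝ)]
    exact Finset.sum_congr rfl fun i _ => by rw [h2 i]
  rw [hsum, hxn]

lemma pairwise_disjoint_atom (n : ℕ) :
    Pairwise (Function.onFun Disjoint (Atom Obar n)) := by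
  intro x y hxy
  exact Disjoint.preimage _ (Set.disjoint_singleton.mpr hxy)

lemma iUnion_atom (n : ℕ) : (⋃ x : Fin n → ↥Obar, Atom Obar n x) = Set.univ := by
  ext ω
  simp only [Set.mem_iUnion, Set.mem_univ, iff_true]
  exact ⟨res Obar n ω, rfl⟩

lemma sum_measure_atom [IsProbabilityMeasure P] (n : ℕ) :
    ∑ x : Fin n → ↥Obar, P (Atom Obar n x) = 1 := by
  rw [← tsum_fintype (L := .unconditional _), ← measure_iUnion (pairwise_disjoint_atom n) (measurableSet_atom Obar n),
    iUnion_atom, measure_univ]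

lemma integral_res [IsProbabilityMeasure P] (n : ℕ) (H : (Fin n → ↥Obar) → ℝ)
    (T : Set (Fin n → ↥Obar)) :
    ∫ ω in (res Obar n) ⁻¹' T, H (res Obar n ω) ∂P
      = ∑ x : Fin n → ↥Obar, T.indicator H x * (P (Atom Obar n x)).toReal := by
  have hT : MeasurableSet T := (Set.toFinite T).measurableSet
  have hres := measurable_res Obar n
  haveI : IsProbabilityMeasure (P.map (res Obar n)) :=
    Measure.isProbabilityMeasure_map hres.aemeasurable
  have hmap : ∫ ω in (res Obar n) ⁻¹' T, H (res Obar n ω) ∂P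
      = ∫ y in T, H y ∂(P.map (res Obar n)) :=
    (setIntegral_map hT (measurable_of_countable H).aestronglyMeasurable
      hres.aemeasurable).symm
  rw [hmap, ← integral_indicator hT, integral_fintype (Integrable.of_finite)]
  refine Finset.sum_congr rfl fun x _ => ?_
  rw [measureReal_def, Measure.map_apply hres (measurableSet_singleton x), smul_eq_mul, mul_comm]
  rfl

lemma mean_zero_sum (μ : Measure ↥Obar) [IsProbabilityMeasure μ]
    (h : (∫ x, (x : ℝ) ∂μ) = 0) : ∑ v : ↥Obar, (v : ℝ) * (μ {v}).toReal = 0 := by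
  rw [integral_fintype (Integrable.of_finite)] at h
  simpa [smul_eq_mul, mul_comm, measureReal_def] using h

lemma martingale_Sn [Nonempty ↥Obar] (hP : IsSwitchMeasure Obar μlo μhi P)
    (hplo : IsProbabilityMeasure μlo) (hphi : IsProbabilityMeasure μhi)
    (hmeanlo : (∫ x, (x : ℝ) ∂μlo) = 0) (hmeanhi : (∫ x, (x : ℝ) ∂μhi) = 0) :
    Martingale (Sn Obar) (coordFiltration Obar) P := by
  classical
  haveI hprob := hP.1
  refine martingale_nat (adapted_Sn Obar) (fun n => integrable_Sn n) (fun n => ?_)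
  refine ae_eq_condExp_of_forall_setIntegral_eq ((coordFiltration Obar).le n)
    (integrable_Sn (n + 1)) (fun s _ _ => (integrable_Sn n).integrableOn)
    (fun s hs _ => ?_) ((stronglyMeasurable_Sn Obar n).aestronglyMeasurable)
  obtain ⟨T, -, rfl⟩ := hs
  set T' : Set (Fin (n + 1) → ↥Obar) := (fun z (i : Fin n) => z i.castSucc) ⁻¹' T with hT'
  have hpre : res Obar n ⁻¹' T = res Obar (n + 1) ⁻¹' T' := rfl
  set Hn : (Fin (n + 1) → ↥Obar) → ℝ := fun z => ∑ i : Fin n, (z i.castSucc : ℝ) with hHn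
  set Hn1 : (Fin (n + 1) → ↥Obar) → ℝ := fun z => ∑ i : Fin (n + 1), (z i : ℝ) with hHn1
  have eqn : ∫ ω in res Obar n ⁻¹' T, Sn Obar n ω ∂P
      = ∫ ω in res Obar (n + 1) ⁻¹' T', Hn (res Obar (n + 1) ω) ∂P := by
    rw [← hpre]
    refine setIntegral_congr_fun (measurable_res Obar n (Set.toFinite T).measurableSet) ?_
    intro ω _
    rw [Sn, Finset.sum_range fun i => ((ω i : ℝ))]
    rfl
  have eqn1 : ∫ ω in res Obar n ⁻¹' T, Sn Obar (n + 1) ω ∂P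
      = ∫ ω in res Obar (n + 1) ⁻¹' T', Hn1 (res Obar (n + 1) ω) ∂P := by
    rw [← hpre]
    refine setIntegral_congr_fun (measurable_res Obar n (Set.toFinite T).measurableSet) ?_
    intro ω _
    rw [Sn, Finset.sum_range fun i => ((ω i : ℝ))]
    rfl
  rw [eqn, eqn1, integral_res, integral_res]
  have hsplit : ∀ x : Fin (n + 1) → ↥Obar,
      T'.indicator Hn1 x = T'.indicator Hn x
        + T'.indicator (fun z => ((z (Fin.last n) : ℝ))) x := by
    intro x
    by_cases hx : x ∈ T'
    · simp only [Set.indicator_of_mem hx, hHn1, hHn, Fin.sum_univ_castSucc]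
    · simp only [Set.indicator_of_notMem hx, add_zero]
  have key : ∑ x : Fin (n + 1) → ↥Obar,
      T'.indicator (fun z => ((z (Fin.last n) : ℝ))) x * (P (Atom Obar (n + 1) x)).toReal
        = 0 := by
    rw [← Equiv.sum_comp (Fin.snocEquiv (fun _ => ↥Obar)), Fintype.sum_prod_type]
    have hterm : ∀ (v : ↥Obar) (y : Fin n → ↥Obar),
        T'.indicator (fun z => ((z (Fin.last n) : ℝ)))
            ((Fin.snocEquiv (fun _ => ↥Obar)) (v, y))
          * (P (Atom Obar (n + 1) ((Fin.snocEquiv (fun _ => ↥Obar)) (v, y)))).toReal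
        = (if y ∈ T then (1:ℝ) else 0) * (P (Atom Obar n y)).toReal
            * ((v : ℝ) *
              ((if (∑ i : Fin n, (y i : ℝ)) ≤ 0 then μhi {v} else μlo {v}).toReal)) := by
      intro v y
      have hsnoc : (Fin.snocEquiv (fun _ => ↥Obar)) (v, y) = Fin.snoc y v := rfl
      have htrunc : (fun i : Fin n => (Fin.snoc y v : Fin (n + 1) → ↥Obar) i.castSucc) = y :=
        funext fun i => Fin.snoc_castSucc _ _ _
      have hmem : Fin.snoc y v ∈ T' ↔ y ∈ T := by
        simp only [hT', Set.mem_preimage]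
        rw [htrunc]
      rw [hsnoc, measure_atom_snoc hP n y v, ENNReal.toReal_mul]
      by_cases hy : y ∈ T
      · rw [Set.indicator_of_mem (hmem.mpr hy), if_pos hy, Fin.snoc_last]
        ring
      · rw [Set.indicator_of_notMem (fun h => hy (hmem.mp h)), if_neg hy]
        ring
    rw [Finset.sum_comm]
    refine Finset.sum_eq_zero fun y _ => ?_
    rw [Finset.sum_congr rfl fun v _ => hterm v y, ← Finset.mul_sum]
    have hzero : ∑ v : ↥Obar, ((v : ℝ) *
        ((if (∑ i : Fin n, (y i : ℝ)) ≤ 0 then μhi {v} else μlo {v}).toReal)) = 0 := by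
      by_cases hc : (∑ i : Fin n, (y i : ℝ)) ≤ 0
      · simp only [if_pos hc]
        exact mean_zero_sum μhi hmeanhi
      · simp only [if_neg hc]
        exact mean_zero_sum μlo hmeanlo
    rw [hzero, mul_zero]
  have hre : ∑ x : Fin (n + 1) → ↥Obar,
      T'.indicator Hn1 x * (P (Atom Obar (n + 1) x)).toReal
    = ∑ x : Fin (n + 1) → ↥Obar,
      (T'.indicator Hn x * (P (Atom Obar (n + 1) x)).toReal
        + T'.indicator (fun z => ((z (Fin.last n) : ℝ))) x
            * (P (Atom Obar (n + 1) x)).toReal) :=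
    Finset.sum_congr rfl fun x _ => by rw [hsplit x, add_mul]
  rw [hre, Finset.sum_add_distrib, key, add_zero]

/-- The probability that all outcomes from some time on are zero is zero. -/
lemma tail_zero [Nonempty ↥Obar] (hP : IsSwitchMeasure Obar μlo μhi P)
    (hlt : ∀ x₀ : ↥Obar, (x₀ : ℝ) = 0 → max (μhi {x₀}) (μlo {x₀}) < 1) :
    P {ω : ℕ → ↥Obar | ∃ m, ∀ i, m ≤ i → ((ω i : ℝ) = 0)} = 0 := by
  classical
  haveI hprob := hP.1
  have hsub : {ω : ℕ → ↥Obar | ∃ m, ∀ i, m ≤ i → ((ω i : ℝ) = 0)}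
      = ⋃ m : ℕ, {ω : ℕ → ↥Obar | ∀ i, m ≤ i → ((ω i : ℝ) = 0)} := by
    ext ω
    simp only [Set.mem_setOf_eq, Set.mem_iUnion]
  rw [hsub]
  refine measure_iUnion_null fun m => ?_
  by_cases h0 : ∃ x₀ : ↥Obar, (x₀ : ℝ) = 0
  · obtain ⟨x₀, hx₀⟩ := h0
    set q : ℝ≥0∞ := max (μhi {x₀}) (μlo {x₀}) with hq
    have hq1 : q < 1 := hlt x₀ hx₀
    set ex : ∀ k, (Fin m → ↥Obar) → (Fin (m + k) → ↥Obar) :=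
      fun k y i => if h : (i : ℕ) < m then y ⟨i, h⟩ else x₀ with hex
    have hstep : ∀ k y, ex (k + 1) y = Fin.snoc (ex k y) x₀ := by
      intro k y
      funext i
      refine Fin.lastCases ?_ (fun j => ?_) i
      · rw [Fin.snoc_last]
        have hnot : ¬ ((Fin.last (m + k) : ℕ) < m) := by
          simp only [Fin.val_last]
          omega
        simp only [hex]
        exact dif_neg hnot
      · rw [Fin.snoc_castSucc]
        simp only [hex, Fin.coe_castSucc]
    have hbound : ∀ k, ∑ y : Fin m → ↥Obar, P (Atom Obar (m + k) (ex k y)) ≤ q ^ k := by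
      intro k
      induction k with
      | zero =>
        have h0' : ∀ y : Fin m → ↥Obar, ex 0 y = y := by
          intro y; funext i
          simp only [hex, Fin.eta]
          exact dif_pos i.isLt
        rw [pow_zero]
        calc ∑ y : Fin m → ↥Obar, P (Atom Obar (m + 0) (ex 0 y))
            = ∑ y : Fin m → ↥Obar, P (Atom Obar m y) :=
              Finset.sum_congr rfl fun y _ => by rw [h0' y]; rfl
          _ ≤ 1 := le_of_eq (sum_measure_atom m)
      | succ k ih =>
        calc ∑ y : Fin m → ↥Obar, P (Atom Obar (m + (k + 1)) (ex (k + 1) y))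
            = ∑ y : Fin m → ↥Obar, P (Atom Obar (m + k) (ex k y)) *
                (if (∑ i : Fin (m + k), ((ex k y i : ℝ))) ≤ 0
                  then μhi {x₀} else μlo {x₀}) := by
              refine Finset.sum_congr rfl fun y _ => ?_
              rw [hstep k y]
              exact measure_atom_snoc hP (m + k) (ex k y) x₀
          _ ≤ ∑ y : Fin m → ↥Obar, P (Atom Obar (m + k) (ex k y)) * q := by
              refine Finset.sum_le_sum fun y _ => ?_
              refine mul_le_mul_right ?_ _
              split
              · exact le_max_left _ _
              · exact le_max_right _ _
          _ = (∑ y : Fin m → ↥Obar, P (Atom Obar (m + k) (ex k y))) * q := by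
              rw [Finset.sum_mul]
          _ ≤ q ^ k * q := mul_le_mul_left ih q
          _ = q ^ (k + 1) := (pow_succ q k).symm
    have hEsub : ∀ k, {ω : ℕ → ↥Obar | ∀ i, m ≤ i → ((ω i : ℝ) = 0)}
        ⊆ ⋃ y : Fin m → ↥Obar, Atom Obar (m + k) (ex k y) := by
      intro k ω hω
      refine Set.mem_iUnion.mpr ⟨res Obar m ω, ?_⟩
      show res Obar (m + k) ω ∈ ({ex k (res Obar m ω)} : Set _)
      rw [Set.mem_singleton_iff]
      funext i
      by_cases h : (i : ℕ) < m
      · simp only [hex, dif_pos h]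
        rfl
      · simp only [hex, dif_neg h]
        exact Subtype.ext ((hω i (le_of_not_gt h)).trans hx₀.symm)
    have hEk : ∀ k, P {ω : ℕ → ↥Obar | ∀ i, m ≤ i → ((ω i : ℝ) = 0)} ≤ q ^ k := fun k =>
      (measure_mono (hEsub k)).trans ((measure_iUnion_fintype_le _ _).trans (hbound k))
    exact le_antisymm
      (ge_of_tendsto' (ENNReal.tendsto_pow_atTop_nhds_zero_of_lt_one hq1) hEk) zero_le
  · have hempty : {ω : ℕ → ↥Obar | ∀ i, m ≤ i → ((ω i : ℝ) = 0)} = ∅ := by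
      ext ω
      simp only [Set.mem_setOf_eq, Set.mem_empty_iff_false, iff_false]
      intro h
      exact h0 ⟨ω m, h m le_rfl⟩
    rw [hempty, measure_empty]

/-- **Theorem (indefinite switching).** Under the no-learning switching measure
`P*`, for every `N ≥ 1` the probability that the running sum stays forever
`≤ 0` (respectively `> 0`) from time `N` on is at most `σ̄/(σ̄+σ̲) < 1`. -/
theorem switching_indefinitely (Obar : Finset ℝ) (μlo μhi : Measure ↥Obar)
    (σlo σhi : ℝ) (hσlo : 0 < σlo) (hσ : σlo < σhi)
    (hplo : IsProbabilityMeasure μlo) (hphi : IsProbabilityMeasure μhi)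
    (hsupplo : ∀ x : ↥Obar, μlo {x} ≠ 0) (hsupphi : ∀ x : ↥Obar, μhi {x} ≠ 0)
    (hmeanlo : (∫ x, (x : ℝ) ∂μlo) = 0) (hmeanhi : (∫ x, (x : ℝ) ∂μhi) = 0)
    (hvarlo : (∫ x, (x : ℝ) ^ 2 ∂μlo) = σlo ^ 2)
    (hvarhi : (∫ x, (x : ℝ) ^ 2 ∂μhi) = σhi ^ 2)
    (Pstar : Measure (ℕ → ↥Obar)) (hP : IsSwitchMeasure Obar μlo μhi Pstar)
    (N : ℕ) (hN : 1 ≤ N) :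
    (Pstar (⋂ n, ⋂ (_ : N ≤ n),
        {ω : ℕ → ↥Obar | ∑ i ∈ Finset.range n, (ω i : ℝ) ≤ 0})
      ≤ ENNReal.ofReal (σhi / (σhi + σlo)) ∧
     Pstar (⋂ n, ⋂ (_ : N ≤ n),
        {ω : ℕ → ↥Obar | 0 < ∑ i ∈ Finset.range n, (ω i : ℝ)})
      ≤ ENNReal.ofReal (σhi / (σhi + σlo))) ∧
    σhi / (σhi + σlo) < 1 := by
  classical
  haveI hprob : IsProbabilityMeasure Pstar := hP.1
  haveI hne : Nonempty ↥Obar := by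
    by_contra h
    rw [not_nonempty_iff] at h
    have h1 := hphi.measure_univ
    rw [Set.univ_eq_empty_iff.mpr h, measure_empty] at h1
    exact zero_ne_one h1
  have hσhi : 0 < σhi := hσlo.trans hσ
  have hfrac : σhi / (σhi + σlo) < 1 := by
    rw [div_lt_one (by linarith)]
    linarith
  -- there is a nonzero outcome
  obtain ⟨v, hv⟩ : ∃ v : ↥Obar, (v : ℝ) ≠ 0 := by
    by_contra hall
    push_neg at hall
    have hzero : (∫ x, (x : ℝ) ^ 2 ∂μhi) = 0 := by
      have h0 : ∀ x : ↥Obar, ((x : ℝ)) ^ 2 = 0 := fun x => by rw [hall x]; ring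
      calc (∫ x, (x : ℝ) ^ 2 ∂μhi) = ∫ _, (0 : ℝ) ∂μhi :=
            integral_congr_ae (ae_of_all _ h0)
        _ = 0 := integral_zero _ _
    rw [hvarhi] at hzero
    nlinarith
  -- the one-step-zero probability is `< 1` for both laws
  have hlt : ∀ x₀ : ↥Obar, (x₀ : ℝ) = 0 → max (μhi {x₀}) (μlo {x₀}) < 1 := by
    intro x₀ h₀
    have hvne : v ≠ x₀ := fun h => hv (by rw [h, h₀])
    have key : ∀ (μ : Measure ↥Obar), IsProbabilityMeasure μ → μ {v} ≠ 0 → μ {x₀} < 1 := by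
      intro μ hp hs
      have hd : Disjoint ({x₀} : Set ↥Obar) {v} :=
        Set.disjoint_singleton.mpr fun h => hvne h.symm
      have hu : μ {x₀} + μ {v} = μ ({x₀} ∪ {v}) :=
        (measure_union hd (measurableSet_singleton v)).symm
      have hle : μ ({x₀} ∪ {v}) ≤ 1 := by
        rw [← hp.measure_univ]
        exact measure_mono (Set.subset_univ _)
      have hfin : μ {x₀} ≠ ∞ :=
        ((measure_mono (Set.subset_univ _)).trans_eq hp.measure_univ).trans_lt
          ENNReal.one_lt_top |>.ne
      calc μ {x₀} < μ {x₀} + μ {v} := ENNReal.lt_add_right hfin hs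
        _ = μ ({x₀} ∪ {v}) := hu
        _ ≤ 1 := hle
    exact max_lt (key μhi hphi (hsupphi v)) (key μlo hplo (hsupplo v))
  -- martingale machinery
  have hmart := martingale_Sn hP hplo hphi hmeanlo hmeanhi
  set R : ℝ≥0 := Obar.sup fun x => ‖x‖₊ with hR
  have hdiff : ∀ (ω : ℕ → ↥Obar) (i : ℕ), |Sn Obar (i + 1) ω - Sn Obar i ω| ≤ (R : ℝ) := by
    intro ω i
    have hs : Sn Obar (i + 1) ω - Sn Obar i ω = ((ω i : ℝ)) := by
      rw [Sn, Sn, Finset.sum_range_succ]; ring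
    rw [hs, ← Real.norm_eq_abs, ← coe_nnnorm]
    exact NNReal.coe_le_coe.mpr (Finset.le_sup (ω i).2)
  have hbdd : ∀ᵐ ω ∂Pstar, ∀ i, |Sn Obar (i + 1) ω - Sn Obar i ω| ≤ (R : ℝ) :=
    ae_of_all _ fun ω i => hdiff ω i
  have hbddneg : ∀ᵐ ω ∂Pstar, ∀ i,
      |(-(Sn Obar)) (i + 1) ω - (-(Sn Obar)) i ω| ≤ (R : ℝ) := by
    refine ae_of_all _ fun ω i => ?_
    have : (-(Sn Obar)) (i + 1) ω - (-(Sn Obar)) i ω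
        = -(Sn Obar (i + 1) ω - Sn Obar i ω) := by
      simp only [Pi.neg_apply]; ring
    rw [this, abs_neg]
    exact hdiff ω i
  have hiff1 := hmart.submartingale.bddAbove_iff_exists_tendsto hbdd
  have hiff2 := hmart.neg.submartingale.bddAbove_iff_exists_tendsto hbddneg
  have hZ : Pstar {ω : ℕ → ↥Obar | ∃ m, ∀ i, m ≤ i → ((ω i : ℝ) = 0)} = 0 :=
    tail_zero hP hlt
  -- a uniform gap around zero
  obtain ⟨δ, hδpos, hδ⟩ : ∃ δ, 0 < δ ∧ ∀ y ∈ Obar, y ≠ 0 → δ ≤ |y| := by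
    by_cases hV : (Obar.filter (fun y => y ≠ 0)).Nonempty
    · refine ⟨(Obar.filter (fun y => y ≠ 0)).inf' hV (fun y => |y|), ?_, ?_⟩
      · rw [Finset.lt_inf'_iff]
        intro y hy
        exact abs_pos.mpr (Finset.mem_filter.mp hy).2
      · intro y hy hy0
        exact Finset.inf'_le _ (Finset.mem_filter.mpr ⟨hy, hy0⟩)
    · exact ⟨1, one_pos, fun y hy hy0 =>
        absurd ⟨y, Finset.mem_filter.mpr ⟨hy, hy0⟩⟩ hV⟩
  -- convergence of the running sums forces eventually-zero outcomes
  have htendZ : ∀ ω : ℕ → ↥Obar,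
      (∃ c, Tendsto (fun n => Sn Obar n ω) atTop (𝓝 c)) →
      ω ∈ {ω : ℕ → ↥Obar | ∃ m, ∀ i, m ≤ i → ((ω i : ℝ) = 0)} := by
    rintro ω ⟨c, hc⟩
    have hstep : Tendsto (fun i => Sn Obar (i + 1) ω - Sn Obar i ω) atTop (𝓝 0) := by
      have h := (hc.comp (tendsto_add_atTop_nat 1)).sub hc
      simpa using h
    have hx : Tendsto (fun i => ((ω i : ℝ))) atTop (𝓝 0) := by
      refine hstep.congr fun i => ?_
      rw [Sn, Sn, Finset.sum_range_succ]; ring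
    have hev : ∀ᶠ i in atTop, |((ω i : ℝ))| < δ := by
      have h := Metric.tendsto_nhds.mp hx δ hδpos
      simpa [Real.dist_eq] using h
    have hev0 : ∀ᶠ i in atTop, ((ω i : ℝ)) = 0 := by
      filter_upwards [hev] with i hi
      by_contra hne0
      exact absurd (hδ _ (ω i).2 hne0) (not_le.mpr hi)
    obtain ⟨m, hm⟩ := eventually_atTop.mp hev0
    exact ⟨m, hm⟩
  -- the event of staying nonpositive forever
  have hzero1 : Pstar (⋂ n, ⋂ (_ : N ≤ n),
      {ω : ℕ → ↥Obar | ∑ i ∈ Finset.range n, (ω i : ℝ) ≤ 0}) = 0 := by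
    have hsubset : (⋂ n, ⋂ (_ : N ≤ n),
        {ω : ℕ → ↥Obar | ∑ i ∈ Finset.range n, (ω i : ℝ) ≤ 0})
        ⊆ {ω : ℕ → ↥Obar | ¬ (BddAbove (Set.range fun n => Sn Obar n ω)
            ↔ ∃ c, Tendsto (fun n => Sn Obar n ω) atTop (𝓝 c))}
          ∪ {ω : ℕ → ↥Obar | ∃ m, ∀ i, m ≤ i → ((ω i : ℝ) = 0)} := by
      intro ω hω
      have hmem : ∀ n, N ≤ n → Sn Obar n ω ≤ 0 := fun n hn =>
        Set.mem_iInter.mp (Set.mem_iInter.mp hω n) hn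
      by_cases hiff : (BddAbove (Set.range fun n => Sn Obar n ω)
          ↔ ∃ c, Tendsto (fun n => Sn Obar n ω) atTop (𝓝 c))
      · right
        refine htendZ ω (hiff.mp ?_)
        refine BddAbove.mono ?_ (BddAbove.union
          (((Set.finite_Iio N).image (fun n => Sn Obar n ω)).bddAbove) (bddAbove_Iic : BddAbove (Set.Iic (0:ℝ))))
        rintro _ ⟨n, rfl⟩
        by_cases hn : n < N
        · exact Or.inl ⟨n, Set.mem_Iio.mpr hn, rfl⟩
        · exact Or.inr (Set.mem_Iic.mpr (hmem n (le_of_not_gt hn)))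
      · left
        exact hiff
    have hle := (measure_mono (μ := Pstar) hsubset).trans (measure_union_le _ _)
    rw [ae_iff.mp hiff1, hZ, add_zero] at hle
    exact le_antisymm hle zero_le
  -- the event of staying positive forever
  have hzero2 : Pstar (⋂ n, ⋂ (_ : N ≤ n),
      {ω : ℕ → ↥Obar | 0 < ∑ i ∈ Finset.range n, (ω i : ℝ)}) = 0 := by
    have hsubset : (⋂ n, ⋂ (_ : N ≤ n),
        {ω : ℕ → ↥Obar | 0 < ∑ i ∈ Finset.range n, (ω i : ℝ)})
        ⊆ {ω : ℕ → ↥Obar | ¬ (BddAbove (Set.range fun n => (-(Sn Obar)) n ω)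
            ↔ ∃ c, Tendsto (fun n => (-(Sn Obar)) n ω) atTop (𝓝 c))}
          ∪ {ω : ℕ → ↥Obar | ∃ m, ∀ i, m ≤ i → ((ω i : ℝ) = 0)} := by
      intro ω hω
      have hmem : ∀ n, N ≤ n → 0 < Sn Obar n ω := fun n hn =>
        Set.mem_iInter.mp (Set.mem_iInter.mp hω n) hn
      by_cases hiff : (BddAbove (Set.range fun n => (-(Sn Obar)) n ω)
          ↔ ∃ c, Tendsto (fun n => (-(Sn Obar)) n ω) atTop (𝓝 c))
      · right
        have hbddrange : BddAbove (Set.range fun n => (-(Sn Obar)) n ω) := by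
          refine BddAbove.mono ?_ (BddAbove.union
            (((Set.finite_Iio N).image (fun n => (-(Sn Obar)) n ω)).bddAbove) (bddAbove_Iic : BddAbove (Set.Iic (0:ℝ))))
          rintro _ ⟨n, rfl⟩
          by_cases hn : n < N
          · exact Or.inl ⟨n, Set.mem_Iio.mpr hn, rfl⟩
          · refine Or.inr (Set.mem_Iic.mpr ?_)
            simp only [Pi.neg_apply]
            linarith [hmem n (le_of_not_gt hn)]
        obtain ⟨c, hc⟩ := hiff.mp hbddrange
        refine htendZ ω ⟨-c, ?_⟩
        have h := hc.neg
        simp only [Pi.neg_apply, neg_neg] at h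
        exact h
      · left
        exact hiff
    have hle := (measure_mono (μ := Pstar) hsubset).trans (measure_union_le _ _)
    rw [ae_iff.mp hiff2, hZ, add_zero] at hle
    exact le_antisymm hle zero_le
  refine ⟨⟨?_, ?_⟩, hfrac⟩
  · rw [hzero1]
    exact zero_le
  · rw [hzero2]
    exact zero_le

end LAB
end
end
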